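/- If two honest validators' ordered anchor sequences are each prefixes of a common infinite sequence of anchors, and each validator's final vertex ordering is obtained by concatenating deterministically-ordered new portions of causal histories of successive anchors, then for any vertex ordered by both validators, the set of vertices preceding it is identical in both orderings (no reordering anomalies). -/
import Mathlib


/-- The vertex ordering and set of ordered vertices after processing the first `k`
anchors: for each successive anchor, append the deterministic sequencing `ord` of
the new portion of its causal history. -/
def orderAcc {X : Type} [DecidableEq X]
    (hist : ℕ → Finset X) (ord : Finset X → List X) : ℕ → List X × Finset X
  | 0 => ([], ∅)
  | k + 1 =>
      let a := orderAcc hist ord k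
      (a.1 ++ ord (hist k \ a.2), a.2 ∪ hist k)

lemma takeWhile_append_of_exists {X : Type} (p : X → Bool) (l t : List X)
    (h : ∃ x ∈ l, p x = false) :
    (l ++ t).takeWhile p = l.takeWhile p := by
  induction l with
  | nil => simp at h
  | cons a l ih =>
    by_cases hpa : p a
    · simp only [List.cons_append, List.takeWhile_cons, hpa]
      obtain ⟨x, hx, hpx⟩ := h
      rw [List.mem_cons] at hx
      rcases hx with rfl | hx
      · simp [hpa] at hpx
      · rw [ih ⟨x, hx, hpx⟩]
    · simp only [List.cons_append, List.takeWhile_cons, hpa]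
      simp [hpa]

lemma orderAcc_prefix {X : Type} [DecidableEq X]
    (hist : ℕ → Finset X) (ord : Finset X → List X)
    (k₁ k₂ : ℕ) (hk : k₁ ≤ k₂) :
    (orderAcc hist ord k₁).1 <+: (orderAcc hist ord k₂).1 := by
  induction k₂ with
  | zero => simp_all
  | succ k ih =>
    rcases Nat.lt_or_ge k₁ (k+1) with h | h
    · exact (ih (Nat.lt_succ_iff.mp h)).trans ⟨_, rfl⟩
    · have : k₁ = k + 1 := le_antisymm hk h
      subst this; exact List.prefix_rfl

/-- No reordering anomalies: if two validators order, respectively, the first `k₁`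
and the first `k₂` anchors of a common anchor sequence with monotone causal
histories, using the same deterministic sequencing rule, then their vertex
orderings are prefix-compatible; hence any vertex ordered by both is preceded by
exactly the same vertices in both orderings. -/
theorem no_reordering_anomalies {X : Type} [DecidableEq X]
    (hist : ℕ → Finset X) (ord : Finset X → List X)
    (hmono : Monotone hist)
    (k₁ k₂ : ℕ) (hk : k₁ ≤ k₂) :
    (orderAcc hist ord k₁).1 <+: (orderAcc hist ord k₂).1 ∧
      ∀ v ∈ (orderAcc hist ord k₁).1,
        (orderAcc hist ord k₁).1.takeWhile (fun u => u ≠ v) =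
          (orderAcc hist ord k₂).1.takeWhile (fun u => u ≠ v) := by
  have hpre := orderAcc_prefix hist ord k₁ k₂ hk
  refine ⟨hpre, fun v hv => ?_⟩
  obtain ⟨t, ht⟩ := hpre
  rw [← ht, takeWhile_append_of_exists]
  exact ⟨v, hv, by simp⟩
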